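/- Let (Σ, μ) be a probability space, f : Σ → Σ a measurable (not necessarily invertible) map preserving μ, with μ ergodic, and let τ ∈ L¹(μ) with τ ≥ 0. For any measurable set I ⊆ Σ with μ(I) > 0, letting n_I(x) = inf{k ≥ 1 : f^k(x) ∈ I} and τ^{n_I}(x) = Σ_{k=0}^{n_I(x)-1} τ(f^k(x)), one has ∫_Σ τ dμ = ∫_I τ^{n_I}(x) dμ(x). -/

import Mathlib

open MeasureTheory

/-- The first return time to a set `A` under the map `f`:
`n_A(x) = inf {k ≥ 1 : f^k(x) ∈ A}` (with the convention `sInf ∅ = 0`). -/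
noncomputable def retTime {X : Type*} (f : X → X) (A : Set X) (x : X) : ℕ :=
  sInf {k : ℕ | 1 ≤ k ∧ f^[k] x ∈ A}

open Filter Set Function
open scoped ENNReal Topology

section Aux

variable {X : Type*} (f : X → X) (I : Set X)

lemma retTime_not_mem_of_lt {x : X} {j : ℕ} (h1 : 1 ≤ j) (h2 : j < retTime f I x) :
    f^[j] x ∉ I := fun hj =>
  absurd (Nat.sInf_le (show j ∈ {k : ℕ | 1 ≤ k ∧ f^[k] x ∈ I} from ⟨h1, hj⟩))
    (not_le.mpr h2)

lemma lt_retTime_iff {x : X} (h : ∃ k, 1 ≤ k ∧ f^[k] x ∈ I) {k : ℕ} :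
    k < retTime f I x ↔ ∀ j, 1 ≤ j → j ≤ k → f^[j] x ∉ I := by
  constructor
  · intro hk j h1 h2
    exact retTime_not_mem_of_lt f I h1 (lt_of_le_of_lt h2 hk)
  · intro hj
    by_contra hk
    push_neg at hk
    have hm : retTime f I x ∈ {k : ℕ | 1 ≤ k ∧ f^[k] x ∈ I} := Nat.sInf_mem h
    exact hj _ hm.1 hk hm.2

lemma retTime_eq_zero_iff {x : X} :
    retTime f I x = 0 ↔ ∀ k, f^[k + 1] x ∉ I := by
  constructor
  · intro h0 k hk
    have hne : {k : ℕ | 1 ≤ k ∧ f^[k] x ∈ I}.Nonempty := ⟨k + 1, by omega, hk⟩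
    have hm : retTime f I x ∈ {k : ℕ | 1 ≤ k ∧ f^[k] x ∈ I} := Nat.sInf_mem hne
    have h1 : 1 ≤ retTime f I x := hm.1
    omega
  · intro h
    have he : {k : ℕ | 1 ≤ k ∧ f^[k] x ∈ I} = ∅ := by
      ext k
      simp only [Set.mem_setOf_eq, Set.mem_empty_iff_false, iff_false, not_and]
      intro h1 hk
      exact h (k - 1) (by rwa [Nat.sub_add_cancel h1])
    rw [retTime, he, Nat.sInf_empty]

lemma retTime_eq_succ_iff {x : X} {n : ℕ} :
    retTime f I x = n + 1 ↔ f^[n + 1] x ∈ I ∧ ∀ k < n, f^[k + 1] x ∉ I := by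
  constructor
  · intro h
    have hne : {k : ℕ | 1 ≤ k ∧ f^[k] x ∈ I}.Nonempty := by
      by_contra hc
      rw [Set.not_nonempty_iff_eq_empty] at hc
      have h0 : retTime f I x = 0 := by rw [retTime, hc, Nat.sInf_empty]
      omega
    have hm : retTime f I x ∈ {k : ℕ | 1 ≤ k ∧ f^[k] x ∈ I} := Nat.sInf_mem hne
    constructor
    · have := hm.2; rwa [h] at this
    · intro k hk
      exact retTime_not_mem_of_lt f I (by omega) (by omega)
  · rintro ⟨h1, h2⟩
    have hne : {k : ℕ | 1 ≤ k ∧ f^[k] x ∈ I}.Nonempty := ⟨n + 1, by omega, h1⟩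
    have hle : retTime f I x ≤ n + 1 :=
      Nat.sInf_le (show n + 1 ∈ {k : ℕ | 1 ≤ k ∧ f^[k] x ∈ I} from ⟨by omega, h1⟩)
    have hm : retTime f I x ∈ {k : ℕ | 1 ≤ k ∧ f^[k] x ∈ I} := Nat.sInf_mem hne
    rcases Nat.lt_or_ge (retTime f I x) (n + 1) with hlt | hge
    · exfalso
      have h1r : 1 ≤ retTime f I x := hm.1
      refine h2 (retTime f I x - 1) (by omega) ?_
      have : retTime f I x - 1 + 1 = retTime f I x := by omega
      rw [this]
      exact hm.2
    · omega

lemma measurable_retTime [MeasurableSpace X] (hf : Measurable f) (hI : MeasurableSet I) :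
    Measurable (retTime f I) := by
  apply measurable_to_countable'
  rintro (_ | n)
  · have h0 : retTime f I ⁻¹' {0} = ⋂ k, (f^[k + 1]) ⁻¹' Iᶜ := by
      ext x
      simp only [mem_preimage, mem_singleton_iff, mem_iInter, mem_compl_iff]
      exact retTime_eq_zero_iff f I
    rw [h0]
    exact MeasurableSet.iInter fun k => (hf.iterate (k + 1)) hI.compl
  · have h1 : retTime f I ⁻¹' {n + 1} =
        (f^[n + 1]) ⁻¹' I ∩ ⋂ k, ⋂ _ : k < n, (f^[k + 1]) ⁻¹' Iᶜ := by
      ext x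
      simp only [mem_preimage, mem_singleton_iff, mem_inter_iff, mem_iInter, mem_compl_iff]
      exact retTime_eq_succ_iff f I
    rw [h1]
    exact ((hf.iterate (n + 1)) hI).inter
      (MeasurableSet.iInter fun k => MeasurableSet.iInter fun _ => (hf.iterate (k + 1)) hI.compl)

lemma measurable_sum_retTime [MeasurableSpace X] {r : X → ℕ} (hr : Measurable r)
    {G : ℕ → X → ℝ≥0∞} (hG : ∀ k, Measurable (G k)) :
    Measurable fun x => ∑ k ∈ Finset.range (r x), G k x := by
  have heq : (fun x => ∑ k ∈ Finset.range (r x), G k x)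
      = fun x => ∑' k, if k < r x then G k x else 0 := by
    ext x
    rw [tsum_eq_sum (s := Finset.range (r x))
      (fun k hk => if_neg fun h => hk (Finset.mem_range.mpr h))]
    exact (Finset.sum_congr rfl fun k hk => by rw [if_pos (Finset.mem_range.mp hk)]).symm
  rw [heq]
  exact Measurable.ennreal_tsum fun k =>
    Measurable.ite (measurableSet_lt measurable_const hr) (hG k) measurable_const

lemma measurable_apply_retTime [MeasurableSpace X] {r : X → ℕ} (hr : Measurable r)
    {G : ℕ → X → ℝ≥0∞} (hG : ∀ k, Measurable (G k)) :
    Measurable fun x => G (r x) x := by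
  have heq : (fun x => G (r x) x) = fun x => ∑' k, if r x = k then G k x else 0 := by
    ext x
    rw [tsum_eq_single (r x) (fun k hk => if_neg fun h => hk h.symm), if_pos rfl]
  rw [heq]
  exact Measurable.ennreal_tsum fun k =>
    Measurable.ite (hr (MeasurableSet.singleton k)) (hG k) measurable_const

end Aux

section Main

variable {X : Type*} [MeasurableSpace X]

/-- By ergodicity, almost every point returns to `I`. -/
lemma ae_exists_return (μ : Measure X) [IsProbabilityMeasure μ]
    (f : X → X) (herg : Ergodic f μ) (I : Set X) (hI : MeasurableSet I)
    (hIpos : 0 < μ I) : ∀ᵐ x ∂μ, ∃ k, 1 ≤ k ∧ f^[k] x ∈ I := by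
  have hmf : Measurable f := herg.toMeasurePreserving.measurable
  set A : Set X := ⋃ j, (f^[j]) ⁻¹' I with hA
  have hAm : MeasurableSet A := MeasurableSet.iUnion fun j => (hmf.iterate j) hI
  have hsub : f ⁻¹' A ⊆ A := by
    rintro x hx
    simp only [hA, mem_iUnion, mem_preimage] at hx ⊢
    obtain ⟨j, hj⟩ := hx
    exact ⟨j + 1, by rwa [Function.iterate_succ_apply]⟩
  have hmeq : μ (f ⁻¹' A) = μ A :=
    herg.toMeasurePreserving.measure_preimage hAm.nullMeasurableSet
  have hae : f ⁻¹' A =ᵐ[μ] A := by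
    refine ae_eq_set.mpr ⟨?_, ?_⟩
    · rw [Set.diff_eq_empty.mpr hsub]; simp
    · rw [measure_diff hsub (hmf hAm).nullMeasurableSet (measure_ne_top μ _), hmeq, tsub_self]
  have hAc : μ Aᶜ = 0 := by
    rcases herg.quasiErgodic.ae_empty_or_univ₀ hAm.nullMeasurableSet hae with h | h
    · exfalso
      have hA0 : μ A = 0 := ae_eq_empty.mp h
      have hIA : I ⊆ A := fun x hx => mem_iUnion.mpr ⟨0, by simpa using hx⟩
      exact absurd (measure_mono_null hIA hA0) (ne_of_gt hIpos)
    · exact ae_eq_univ.mp h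
  have hAc' : μ (f ⁻¹' Aᶜ) = 0 := by
    rw [herg.toMeasurePreserving.measure_preimage hAm.compl.nullMeasurableSet]
    exact hAc
  rw [ae_iff]
  refine measure_mono_null ?_ hAc'
  intro x hx
  simp only [mem_setOf_eq, not_exists, not_and] at hx
  simp only [mem_preimage, mem_compl_iff, hA, mem_iUnion, not_exists]
  intro j hj
  rw [← Function.iterate_succ_apply] at hj
  exact hx (j + 1) (by omega) hj

/-- The key `lintegral` identity (Kac-type formula for a roof function). -/
lemma key_lintegral (μ : Measure X) [IsProbabilityMeasure μ]
    (f : X → X) (herg : Ergodic f μ) (I : Set X) (hI : MeasurableSet I)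
    (hIpos : 0 < μ I)
    (g : X → ℝ≥0∞) (hg : Measurable g) (hgfin : ∫⁻ x, g x ∂μ ≠ ⊤) :
    ∫⁻ x, g x ∂μ
      = ∫⁻ x in I, ∑ k ∈ Finset.range (retTime f I x), g (f^[k + 1] x) ∂μ := by
  have hf := herg.toMeasurePreserving
  have hmf : Measurable f := hf.measurable
  set E : ℕ → Set X := fun k => {x | ∀ j < k, f^[j] x ∉ I} with hE_def
  have hE : ∀ k, MeasurableSet (E k) := by
    intro k
    have : E k = ⋂ j, ⋂ _ : j < k, (f^[j]) ⁻¹' Iᶜ := by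
      ext x; simp [hE_def]
    rw [this]
    exact MeasurableSet.iInter fun j => MeasurableSet.iInter fun _ => (hmf.iterate j) hI.compl
  have hEs : ∀ k, E (k + 1) = f ⁻¹' (E k) \ I := by
    intro k
    ext x
    simp only [hE_def, mem_setOf_eq, mem_diff, mem_preimage]
    constructor
    · intro h
      refine ⟨fun j hj => ?_, by simpa using h 0 (by omega)⟩
      rw [← Function.iterate_succ_apply]
      exact h (j + 1) (by omega)
    · rintro ⟨h1, h2⟩ j hj
      cases j with
      | zero => simpa using h2
      | succ j => rw [Function.iterate_succ_apply]; exact h1 j (by omega)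
  set a : ℕ → ℝ≥0∞ := fun k => ∫⁻ x in E k, g (f^[k] x) ∂μ with ha_def
  set c : ℕ → ℝ≥0∞ := fun k => ∫⁻ x in I ∩ f ⁻¹' (E k), g (f^[k + 1] x) ∂μ with hc_def
  have step : ∀ k, a k = c k + a (k + 1) := by
    intro k
    have hmk : Measurable fun x => (E k).indicator (fun y => g (f^[k] y)) x :=
      (hg.comp (hmf.iterate k)).indicator (hE k)
    calc a k = ∫⁻ x, (E k).indicator (fun y => g (f^[k] y)) x ∂μ :=
            (lintegral_indicator (hE k) _).symm
      _ = ∫⁻ x, (E k).indicator (fun y => g (f^[k] y)) (f x) ∂μ :=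
            (hf.lintegral_comp hmk).symm
      _ = ∫⁻ x, (f ⁻¹' E k).indicator ((fun y => g (f^[k] y)) ∘ f) x ∂μ :=
            lintegral_congr fun x => (Set.indicator_comp_right f).symm
      _ = ∫⁻ x in f ⁻¹' E k, g (f^[k + 1] x) ∂μ := by
            rw [lintegral_indicator (hmf (hE k))]
            exact lintegral_congr fun x => by
              rw [comp_apply, ← Function.iterate_succ_apply]
      _ = (∫⁻ x in f ⁻¹' E k ∩ I, g (f^[k + 1] x) ∂μ)
            + ∫⁻ x in f ⁻¹' E k \ I, g (f^[k + 1] x) ∂μ :=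
            (lintegral_inter_add_diff _ _ hI).symm
      _ = c k + a (k + 1) := by
            rw [Set.inter_comm (f ⁻¹' E k) I, ← hEs k]
  have telescope : ∀ N, ∫⁻ x, g x ∂μ = (∑ k ∈ Finset.range N, c k) + a N := by
    intro N
    induction N with
    | zero =>
      have hE0 : E 0 = Set.univ := by ext x; simp [hE_def]
      simp [ha_def, hE0]
    | succ n ih => rw [ih, step n, Finset.sum_range_succ]; ring
  have hnoret : μ {x | ¬ ∃ k, 1 ≤ k ∧ f^[k] x ∈ I} = 0 := by
    have := ae_exists_return μ f herg I hI hIpos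
    rwa [ae_iff] at this
  have hInull : μ (⋂ N, E N) = 0 := by
    refine measure_mono_null ?_ hnoret
    intro x hx
    simp only [mem_iInter, hE_def, mem_setOf_eq] at hx
    simp only [mem_setOf_eq, not_exists]
    intro k hk
    exact hx (k + 1) k (by omega) hk.2
  have htend : Tendsto a atTop (𝓝 0) := by
    rw [ENNReal.tendsto_nhds_zero]
    intro ε hε
    have hdom : Tendsto (fun M : ℕ => ∫⁻ x, (g x - M) ∂μ) atTop (𝓝 0) := by
      have h0 : (0 : ℝ≥0∞) = ∫⁻ _ , (0 : ℝ≥0∞) ∂μ := by simp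
      rw [h0]
      refine tendsto_lintegral_of_dominated_convergence g
        (fun M => hg.sub measurable_const)
        (fun M => Eventually.of_forall fun x => tsub_le_self) hgfin ?_
      filter_upwards [ae_lt_top hg hgfin] with x hx
      obtain ⟨n₀, hn₀⟩ := ENNReal.exists_nat_gt hx.ne
      refine Tendsto.congr' ?_ tendsto_const_nhds
      filter_upwards [eventually_ge_atTop n₀] with M hM
      exact (tsub_eq_zero_of_le (hn₀.le.trans (by exact_mod_cast Nat.cast_le.mpr hM))).symm
    obtain ⟨M, hM⟩ : ∃ M : ℕ, ∫⁻ x, (g x - M) ∂μ ≤ ε / 2 :=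
      ((ENNReal.tendsto_nhds_zero.mp hdom) (ε / 2)
        (ENNReal.half_pos (ne_of_gt hε))).exists
    have hanti : Antitone E := by
      intro m n hmn x hx j hj
      exact hx j (lt_of_lt_of_le hj hmn)
    have hμE : Tendsto (fun N => μ (E N)) atTop (𝓝 0) := by
      have h := tendsto_measure_iInter_atTop (fun k => (hE k).nullMeasurableSet) hanti
        ⟨0, measure_ne_top μ _⟩
      rwa [hInull] at h
    have hMul : Tendsto (fun N => (M : ℝ≥0∞) * μ (E N)) atTop (𝓝 0) := by
      have := ENNReal.Tendsto.const_mul (a := (M : ℝ≥0∞)) hμE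
        (Or.inr (ENNReal.natCast_ne_top M))
      simpa using this
    have hbound : ∀ N, a N ≤ (M : ℝ≥0∞) * μ (E N) + ∫⁻ x, (g x - M) ∂μ := by
      intro N
      calc a N ≤ ∫⁻ x in E N, ((M : ℝ≥0∞) + (g (f^[N] x) - M)) ∂μ :=
            lintegral_mono fun x => le_add_tsub
        _ = (M : ℝ≥0∞) * μ (E N) + ∫⁻ x in E N, (g (f^[N] x) - M) ∂μ := by
            rw [lintegral_add_left measurable_const, setLIntegral_const]
        _ ≤ (M : ℝ≥0∞) * μ (E N) + ∫⁻ x, (g (f^[N] x) - M) ∂μ :=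
            add_le_add_right (lintegral_mono' Measure.restrict_le_self le_rfl) _
        _ = (M : ℝ≥0∞) * μ (E N) + ∫⁻ x, (g x - M) ∂μ := by
            rw [(hf.iterate N).lintegral_comp (f := fun x => g x - M) (hg.sub measurable_const)]
    filter_upwards [(ENNReal.tendsto_nhds_zero.mp hMul) (ε / 2)
      (ENNReal.half_pos (ne_of_gt hε))] with N hN
    calc a N ≤ (M : ℝ≥0∞) * μ (E N) + ∫⁻ x, (g x - M) ∂μ := hbound N
      _ ≤ ε / 2 + ε / 2 := add_le_add hN hM
      _ = ε := ENNReal.add_halves ε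
  have hsum : ∑' k, c k = ∫⁻ x, g x ∂μ := by
    have hps := ENNReal.tendsto_nat_tsum c
    have h1 : Tendsto (fun N => (∑ k ∈ Finset.range N, c k) + a N) atTop
        (𝓝 (∑' k, c k)) := by simpa using hps.add htend
    exact tendsto_nhds_unique (h1.congr fun N => (telescope N).symm)
      tendsto_const_nhds
  have hck : ∀ k, c k = ∫⁻ x in I,
      (f ⁻¹' E k).indicator (fun y => g (f^[k + 1] y)) x ∂μ := by
    intro k
    rw [lintegral_indicator (hmf (hE k)), Measure.restrict_restrict (hmf (hE k)),
      Set.inter_comm]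
  have htsum : ∫⁻ x, g x ∂μ = ∫⁻ x in I,
      ∑' k, (f ⁻¹' E k).indicator (fun y => g (f^[k + 1] y)) x ∂μ := by
    have hm : ∀ k : ℕ, AEMeasurable
        (fun x => (f ⁻¹' E k).indicator (fun y => g (f^[k + 1] y)) x) (μ.restrict I) :=
      fun k =>
        (((hg.comp (hmf.iterate (k + 1)) :
          Measurable fun y => g (f^[k + 1] y))).indicator (hmf (hE k))).aemeasurable
    rw [lintegral_tsum hm]
    rw [← hsum]
    exact tsum_congr fun k => hck k
  have hmemE : ∀ (x : X), (∃ k, 1 ≤ k ∧ f^[k] x ∈ I) → ∀ k,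
      (f x ∈ E k ↔ k < retTime f I x) := by
    intro x hne k
    have h1 : f x ∈ E k ↔ ∀ j, 1 ≤ j → j ≤ k → f^[j] x ∉ I := by
      simp only [hE_def, mem_setOf_eq]
      constructor
      · intro h j hj1 hj2
        have : f^[j] x = f^[j - 1] (f x) := by
          rw [← Function.iterate_succ_apply]
          congr 1
          omega
        rw [this]
        exact h (j - 1) (by omega)
      · intro h j hj
        rw [← Function.iterate_succ_apply]
        exact h (j + 1) (by omega) (by omega)
    rw [h1]
    exact (lt_retTime_iff f I hne).symm
  rw [htsum]
  refine lintegral_congr_ae ?_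
  filter_upwards [ae_restrict_of_ae (ae_exists_return μ f herg I hI hIpos)] with x hx
  have hzero : ∀ k ∉ Finset.range (retTime f I x),
      (f ⁻¹' E k).indicator (fun y => g (f^[k + 1] y)) x = 0 := by
    intro k hk
    have hnm : x ∉ f ⁻¹' E k := fun hmem =>
      hk (Finset.mem_range.mpr ((hmemE x hx k).mp hmem))
    exact Set.indicator_of_notMem hnm _
  rw [tsum_eq_sum hzero]
  refine Finset.sum_congr rfl fun k hk => ?_
  exact Set.indicator_of_mem
    (Set.mem_preimage.mpr ((hmemE x hx k).mpr (Finset.mem_range.mp hk)))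
    (fun y => g (f^[k + 1] y))

end Main

/-- For an ergodic measure preserving (not necessarily invertible) map `f` on a
probability space `(X, μ)`, a nonnegative integrable roof function `τ` and a
measurable set `I` with `μ(I) > 0`, the Birkhoff sum of `τ` up to the first return
time `n_I` satisfies `∫_X τ dμ = ∫_I τ^{n_I} dμ`. -/
theorem integral_roof_eq_integral_birkhoff_return_noninvertible {X : Type*}
    [MeasurableSpace X] (μ : Measure X) [IsProbabilityMeasure μ]
    (f : X → X) (herg : Ergodic f μ)
    (τ : X → ℝ) (hτint : Integrable τ μ) (hτnonneg : ∀ x, 0 ≤ τ x)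
    (I : Set X) (hI : MeasurableSet I) (hIpos : 0 < μ I) :
    ∫ x, τ x ∂μ = ∫ x in I, (∑ k ∈ Finset.range (retTime f I x), τ (f^[k] x)) ∂μ := by
  classical
  have hf := herg.toMeasurePreserving
  have hmf : Measurable f := hf.measurable
  have hr : Measurable (retTime f I) := measurable_retTime f I hmf hI
  obtain ⟨τ', hτ'meas, hτ'ae⟩ : ∃ τ' : X → ℝ, Measurable τ' ∧ τ =ᵐ[μ] τ' := by
    have h := hτint.aestronglyMeasurable
    exact ⟨h.mk τ, h.stronglyMeasurable_mk.measurable, h.ae_eq_mk⟩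
  set g : X → ℝ≥0∞ := fun x => ENNReal.ofReal (τ' x) with hg_def
  have hg : Measurable g := hτ'meas.ennreal_ofReal
  have hgτ : ∀ᵐ x ∂μ, g x = ENNReal.ofReal (τ x) :=
    hτ'ae.mono fun x hx => by rw [hg_def, hx]
  have hgfin : ∫⁻ x, g x ∂μ ≠ ⊤ := by
    rw [lintegral_congr_ae hgτ]
    exact hτint.lintegral_lt_top.ne
  have hgτk : ∀ k : ℕ, ∀ᵐ x ∂μ, g (f^[k] x) = ENNReal.ofReal (τ (f^[k] x)) := by
    intro k
    exact (hf.iterate k).quasiMeasurePreserving.ae hgτ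
  have key1 := key_lintegral μ f herg I hI hIpos g hg hgfin
  have hIg : Measurable (I.indicator g) := hg.indicator hI
  have hIgfin : ∫⁻ x, I.indicator g x ∂μ ≠ ⊤ :=
    ne_top_of_le_ne_top hgfin (lintegral_mono fun x => Set.indicator_le_self _ _ x)
  have key2 := key_lintegral μ f herg I hI hIpos (I.indicator g) hIg hIgfin
  have hrae : ∀ᵐ x ∂(μ.restrict I), ∃ k, 1 ≤ k ∧ f^[k] x ∈ I :=
    ae_restrict_of_ae (ae_exists_return μ f herg I hI hIpos)
  have key2' : ∫⁻ x in I, g x ∂μ = ∫⁻ x in I, g (f^[retTime f I x] x) ∂μ := by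
    rw [← lintegral_indicator hI, key2]
    refine lintegral_congr_ae ?_
    filter_upwards [hrae] with x hx
    have hm : retTime f I x ∈ {k : ℕ | 1 ≤ k ∧ f^[k] x ∈ I} := Nat.sInf_mem hx
    have h1 : 1 ≤ retTime f I x := hm.1
    have hmem : f^[retTime f I x] x ∈ I := hm.2
    rw [Finset.sum_eq_single_of_mem (retTime f I x - 1)
      (Finset.mem_range.mpr (by omega)) ?_]
    · have heq : retTime f I x - 1 + 1 = retTime f I x := by omega
      rw [heq, Set.indicator_of_mem hmem]
    · intro k hk hkne
      have hklt : k + 1 < retTime f I x := by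
        have := Finset.mem_range.mp hk; omega
      exact Set.indicator_of_notMem (retTime_not_mem_of_lt f I (by omega) hklt) _
  have hpt : ∀ x : X,
      (∑ k ∈ Finset.range (retTime f I x), g (f^[k] x)) + g (f^[retTime f I x] x)
        = g x + ∑ k ∈ Finset.range (retTime f I x), g (f^[k + 1] x) := by
    intro x
    have h1 := Finset.sum_range_succ (fun k => g (f^[k] x)) (retTime f I x)
    have h2 := Finset.sum_range_succ' (fun k => g (f^[k] x)) (retTime f I x)
    simp only [Function.iterate_zero_apply] at h2
    rw [← h1, h2, add_comm]
  have hG1 : Measurable fun x => ∑ k ∈ Finset.range (retTime f I x), g (f^[k] x) :=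
    measurable_sum_retTime hr fun k => hg.comp (hmf.iterate k)
  have hG2 : Measurable fun x => g (f^[retTime f I x] x) :=
    measurable_apply_retTime hr fun k => hg.comp (hmf.iterate k)
  have hint : (∫⁻ x in I, ∑ k ∈ Finset.range (retTime f I x), g (f^[k] x) ∂μ)
        + ∫⁻ x in I, g (f^[retTime f I x] x) ∂μ
      = (∫⁻ x in I, g x ∂μ)
        + ∫⁻ x in I, ∑ k ∈ Finset.range (retTime f I x), g (f^[k + 1] x) ∂μ := by
    rw [← lintegral_add_left hG1, ← lintegral_add_left hg]
    exact lintegral_congr fun x => hpt x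
  have hBfin : ∫⁻ x in I, g x ∂μ ≠ ⊤ :=
    ne_top_of_le_ne_top hgfin (lintegral_mono' Measure.restrict_le_self le_rfl)
  have hmain : ∫⁻ x in I, ∑ k ∈ Finset.range (retTime f I x), g (f^[k] x) ∂μ
      = ∫⁻ x, g x ∂μ := by
    rw [← key2', ← key1] at hint
    -- hint : A + B = B + T
    rw [add_comm (∫⁻ x in I, ∑ k ∈ Finset.range (retTime f I x), g (f^[k] x) ∂μ)
      (∫⁻ x in I, g x ∂μ)] at hint
    exact (ENNReal.add_right_inj hBfin).mp hint
  -- convert to Bochner integrals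
  have hL : ∫ x, τ x ∂μ = (∫⁻ x, g x ∂μ).toReal := by
    rw [integral_eq_lintegral_of_nonneg_ae (Eventually.of_forall hτnonneg)
      hτint.aestronglyMeasurable]
    congr 1
    exact lintegral_congr_ae (hgτ.mono fun x hx => hx.symm)
  have hRae : (fun x => ∑ k ∈ Finset.range (retTime f I x), τ (f^[k] x))
      =ᵐ[μ.restrict I]
      fun x => (∑ k ∈ Finset.range (retTime f I x), g (f^[k] x)).toReal := by
    have hall : ∀ᵐ x ∂μ, ∀ k, g (f^[k] x) = ENNReal.ofReal (τ (f^[k] x)) :=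
      ae_all_iff.mpr hgτk
    refine ae_restrict_of_ae (hall.mono fun x hx => ?_)
    simp only [hx]
    rw [← ENNReal.ofReal_sum_of_nonneg (fun i _ => hτnonneg _),
      ENNReal.toReal_ofReal (Finset.sum_nonneg fun i _ => hτnonneg _)]
  have hsumlt : ∀ᵐ x ∂(μ.restrict I),
      (∑ k ∈ Finset.range (retTime f I x), g (f^[k] x)) < ⊤ :=
    ae_lt_top hG1 (by rw [hmain]; exact hgfin)
  have hR : ∫ x in I, (∑ k ∈ Finset.range (retTime f I x), τ (f^[k] x)) ∂μ
      = (∫⁻ x in I, ∑ k ∈ Finset.range (retTime f I x), g (f^[k] x) ∂μ).toReal := by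
    rw [integral_congr_ae hRae,
      integral_eq_lintegral_of_nonneg_ae
        (Eventually.of_forall fun x => ENNReal.toReal_nonneg)
        hG1.ennreal_toReal.aestronglyMeasurable]
    congr 1
    refine lintegral_congr_ae (hsumlt.mono fun x hx => ?_)
    exact ENNReal.ofReal_toReal hx.ne
  rw [hL, hR, hmain]
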